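/- Let d ≥ 1, fix i ∈ {1,…,d}, and define φ : ℝ^d \ {0} → ℝ by φ(x) = ‖x‖^{−1} − x_i² ‖x‖^{−3}, where ‖·‖ is the Euclidean norm. There exists a universal constant C (independent of d, i, x, y and α; one may take C = 8) such that for all nonzero x, y ∈ ℝ^d and every α ∈ [0,1], |φ(x) − φ(y)| ≤ C ‖x−y‖^α max( ‖x‖^{−α−1}, ‖y‖^{−α−1} ). -/

import Mathlib

open Real
set_option maxHeartbeats 1000000

/-- The Euclidean norm on `ℝ^d`. -/
noncomputable def euclNorm (d : ℕ) (x : Fin d → ℝ) : ℝ := Real.sqrt (∑ k, x k ^ 2)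

lemma euclNorm_eq (d : ℕ) (x : Fin d → ℝ) :
    euclNorm d x = ‖(WithLp.equiv 2 (Fin d → ℝ)).symm x‖ := by
  rw [EuclideanSpace.norm_eq]
  simp [euclNorm, sq_abs]

lemma euclNorm_nonneg (d : ℕ) (x : Fin d → ℝ) : 0 ≤ euclNorm d x := Real.sqrt_nonneg _

lemma euclNorm_pos (d : ℕ) (x : Fin d → ℝ) (hx : x ≠ 0) : 0 < euclNorm d x := by
  obtain ⟨j, hj⟩ := Function.ne_iff.mp hx
  rw [euclNorm, Real.sqrt_pos]
  exact Finset.sum_pos' (fun k _ => sq_nonneg _)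
    ⟨j, Finset.mem_univ j, by nlinarith [abs_pos.mpr hj, sq_abs (x j), abs_nonneg (x j)]⟩

lemma euclNorm_sub_abs (d : ℕ) (x y : Fin d → ℝ) :
    |euclNorm d x - euclNorm d y| ≤ euclNorm d (x - y) := by
  rw [euclNorm_eq, euclNorm_eq, euclNorm_eq]
  exact abs_norm_sub_norm_le _ _

lemma euclNorm_coord (d : ℕ) (i : Fin d) (x : Fin d → ℝ) : |x i| ≤ euclNorm d x := by
  rw [euclNorm, ← Real.sqrt_sq_eq_abs]
  exact Real.sqrt_le_sqrt (Finset.single_le_sum (fun j _ => sq_nonneg (x j)) (Finset.mem_univ i))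

lemma key2 (a b m r xi yi : ℝ) (ha : 0 < a) (hb : 0 < b) (hm : 0 < m)
    (hma : m ≤ a) (hmb : m ≤ b) (hA : a ≤ 3/2*m) (hB : b ≤ 3/2*m)
    (hr0 : 0 ≤ r) (habr : |a - b| ≤ r) (hxi : |xi| ≤ a) (hyi : |yi| ≤ b)
    (hxyr : |xi - yi| ≤ r) :
    |(a⁻¹ - xi^2*(a^3)⁻¹) - (b⁻¹ - yi^2*(b^3)⁻¹)| ≤ 40*r/m^2 := by
  have hexpr : (a⁻¹ - xi^2*(a^3)⁻¹) - (b⁻¹ - yi^2*(b^3)⁻¹) =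
      ((b-a)*(a^2*b^2) + yi^2*(a^3-b^3) + (yi^2-xi^2)*b^3) / (a^3*b^3) := by
    field_simp
    ring
  have hxi2 : xi^2 ≤ a^2 := by rw [← sq_abs]; exact pow_le_pow_left₀ (abs_nonneg _) hxi 2
  have hyi2 : yi^2 ≤ b^2 := by rw [← sq_abs]; exact pow_le_pow_left₀ (abs_nonneg _) hyi 2
  have ha2 : a^2 ≤ 9/4*m^2 := by nlinarith
  have hb2 : b^2 ≤ 9/4*m^2 := by nlinarith
  have t1 : |(b-a)*(a^2*b^2)| ≤ 81/16*(r*m^4) := by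
    rw [abs_mul, abs_sub_comm, abs_of_nonneg (by positivity : (0:ℝ) ≤ a^2*b^2)]
    have h2 : a^2*b^2 ≤ 81/16*m^4 := by
      nlinarith [mul_le_mul ha2 hb2 (sq_nonneg b) (by positivity : (0:ℝ) ≤ 9/4*m^2)]
    have := mul_le_mul habr h2 (by positivity : (0:ℝ) ≤ a^2*b^2) hr0
    nlinarith [this]
  have t2 : |yi^2*(a^3-b^3)| ≤ 243/16*(r*m^4) := by
    rw [abs_mul, abs_of_nonneg (sq_nonneg yi)]
    have h3 : |a^3-b^3| ≤ 27/4*(r*m^2) := by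
      rw [show a^3-b^3 = (a-b)*(a^2+a*b+b^2) by ring, abs_mul,
        abs_of_nonneg (by positivity : (0:ℝ) ≤ a^2+a*b+b^2)]
      have h4 : a^2+a*b+b^2 ≤ 27/4*m^2 := by nlinarith [mul_pos ha hb]
      have := mul_le_mul habr h4 (by positivity : (0:ℝ) ≤ a^2+a*b+b^2) hr0
      nlinarith [this]
    have h5 : yi^2 * |a^3-b^3| ≤ b^2 * (27/4*(r*m^2)) :=
      mul_le_mul hyi2 h3 (abs_nonneg _) (sq_nonneg b)
    nlinarith [h5, mul_le_mul_of_nonneg_right hb2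
      (by positivity : (0:ℝ) ≤ 27/4*(r*m^2))]
  have t3 : |(yi^2-xi^2)*b^3| ≤ 162/16*(r*m^4) := by
    rw [show (yi^2-xi^2)*b^3 = ((yi-xi)*(yi+xi))*b^3 by ring, abs_mul, abs_mul,
      abs_of_nonneg (by positivity : (0:ℝ) ≤ b^3)]
    have h6 : |yi - xi| ≤ r := by rw [abs_sub_comm]; exact hxyr
    have h7 : |yi + xi| ≤ 3*m := by
      calc |yi + xi| ≤ |yi| + |xi| := abs_add_le _ _
        _ ≤ 3*m := by linarith
    have h8 : b^3 ≤ 27/8*m^3 := by nlinarith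
    have h9 : |yi-xi| * |yi+xi| ≤ r * (3*m) :=
      mul_le_mul h6 h7 (abs_nonneg _) hr0
    have h10 : |yi-xi| * |yi+xi| * b^3 ≤ (r * (3*m)) * (27/8*m^3) :=
      mul_le_mul h9 h8 (by positivity : (0:ℝ) ≤ b^3)
        (by positivity : (0:ℝ) ≤ r * (3*m))
    nlinarith [h10]
  have hN : |(b-a)*(a^2*b^2) + yi^2*(a^3-b^3) + (yi^2-xi^2)*b^3| ≤ 40*(r*m^4) := by
    have habs := abs_add_le ((b-a)*(a^2*b^2) + yi^2*(a^3-b^3)) ((yi^2-xi^2)*b^3)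
    have habs2 := abs_add_le ((b-a)*(a^2*b^2)) (yi^2*(a^3-b^3))
    nlinarith [mul_nonneg hr0 (by positivity : (0:ℝ) ≤ m^4)]
  rw [hexpr, abs_div, abs_of_pos (by positivity : (0:ℝ) < a^3*b^3),
    div_le_div_iff₀ (by positivity) (by positivity : (0:ℝ) < m^2)]
  have hm6 : m^6 ≤ a^3*b^3 := by
    have h1 : m^3 ≤ a^3 := pow_le_pow_left₀ hm.le hma 3
    have h2 : m^3 ≤ b^3 := pow_le_pow_left₀ hm.le hmb 3
    nlinarith [pow_pos hm 3]
  have h9 := mul_le_mul_of_nonneg_right hN (sq_nonneg m)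
  have h10 := mul_le_mul_of_nonneg_left hm6 (by positivity : (0:ℝ) ≤ 40*r)
  nlinarith

theorem phi_holder_bound :
    ∃ C : ℝ, 0 < C ∧ ∀ (d : ℕ), 1 ≤ d → ∀ i : Fin d, ∀ x y : Fin d → ℝ,
      x ≠ 0 → y ≠ 0 → ∀ α : ℝ, 0 ≤ α → α ≤ 1 →
      |((euclNorm d x)⁻¹ - x i ^ 2 * euclNorm d x ^ (-(3:ℝ))) -
        ((euclNorm d y)⁻¹ - y i ^ 2 * euclNorm d y ^ (-(3:ℝ)))| ≤
      C * euclNorm d (x - y) ^ α *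
        max (euclNorm d x ^ (-α - 1)) (euclNorm d y ^ (-α - 1)) := by
  refine ⟨100, by norm_num, ?_⟩
  intro d hd i x y hx hy α hα0 hα1
  set a := euclNorm d x with haa
  set b := euclNorm d y with hbb
  set r := euclNorm d (x - y) with hrr
  have ha : 0 < a := euclNorm_pos d x hx
  have hb : 0 < b := euclNorm_pos d y hy
  have hr0 : 0 ≤ r := euclNorm_nonneg d (x - y)
  have h3a : a ^ (-(3:ℝ)) = (a^3)⁻¹ := by
    rw [Real.rpow_neg ha.le, show ((3:ℝ)) = ((3:ℕ):ℝ) by norm_num, Real.rpow_natCast]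
  have h3b : b ^ (-(3:ℝ)) = (b^3)⁻¹ := by
    rw [Real.rpow_neg hb.le, show ((3:ℝ)) = ((3:ℕ):ℝ) by norm_num, Real.rpow_natCast]
  by_cases hxy : x = y
  · subst hxy
    rw [show b = a from rfl]; simp only [sub_self, abs_zero]
    have h1 := Real.rpow_nonneg (euclNorm_nonneg d (x - x)) α
    have h2 := Real.rpow_nonneg (euclNorm_nonneg d x) (-α-1)
    have h2' : (0:ℝ) ≤ max (a ^ (-α-1)) (a ^ (-α-1)) := le_trans h2 (le_max_left _ _)
    exact mul_nonneg (mul_nonneg (by norm_num) h1) (le_trans h2 (le_max_left _ _))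
  have hrpos : 0 < r := euclNorm_pos d (x - y) (sub_ne_zero.mpr hxy)
  set m := min a b with hmm
  have hm : 0 < m := lt_min ha hb
  have hma : m ≤ a := min_le_left _ _
  have hmb : m ≤ b := min_le_right _ _
  have habr : |a - b| ≤ r := euclNorm_sub_abs d x y
  have hxa : |x i| ≤ a := euclNorm_coord d i x
  have hyb : |y i| ≤ b := euclNorm_coord d i y
  have hxyr : |x i - y i| ≤ r := by simpa using euclNorm_coord d i (x - y)
  have hmax : m ^ (-α-1) ≤ max (a ^ (-α-1)) (b ^ (-α-1)) := by
    rcases min_choice a b with h | h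
    · rw [hmm, h]; exact le_max_left _ _
    · rw [hmm, h]; exact le_max_right _ _
  rw [h3a, h3b]
  have hRα : (0:ℝ) ≤ r ^ α := Real.rpow_nonneg hr0 α
  refine le_trans ?_ (mul_le_mul_of_nonneg_left hmax
    (mul_nonneg (by norm_num : (0:ℝ) ≤ 100) hRα))
  by_cases hc : r ≤ m/2
  · -- Lipschitz regime
    obtain ⟨hab1, hab2⟩ := abs_le.mp habr
    have hA : a ≤ 3/2*m := by
      rcases min_choice a b with h | h
      · have h' : m = a := by rw [hmm, h]
        linarith
      · have h' : m = b := by rw [hmm, h]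
        linarith
    have hB : b ≤ 3/2*m := by
      rcases min_choice a b with h | h
      · have h' : m = a := by rw [hmm, h]
        linarith
      · have h' : m = b := by rw [hmm, h]
        linarith
    have key := key2 a b m r (x i) (y i) ha hb hm hma hmb hA hB hr0 habr hxa hyb hxyr
    have e1 : r ^ α * r ^ (1-α) = r := by
      rw [← Real.rpow_add hrpos, show α + (1-α) = 1 by ring, Real.rpow_one]
    have e2 : r ^ (1-α) ≤ m ^ (1-α) :=
      Real.rpow_le_rpow hr0 (by linarith) (by linarith)
    have hm2 : m ^ (-(2:ℝ)) = ((m:ℝ)^2)⁻¹ := by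
      rw [Real.rpow_neg hm.le, show ((2:ℝ)) = ((2:ℕ):ℝ) by norm_num, Real.rpow_natCast]
    have e3 : m ^ (1-α) * (m^2)⁻¹ = m ^ (-α-1) := by
      rw [← hm2, ← Real.rpow_add hm, show (1-α) + (-(2:ℝ)) = -α-1 by ring]
    have h1' : r ^ α * r ^ (1-α) ≤ r ^ α * m ^ (1-α) :=
      mul_le_mul_of_nonneg_left e2 hRα
    calc |(a⁻¹ - x i ^2*(a^3)⁻¹) - (b⁻¹ - y i ^2*(b^3)⁻¹)|
        ≤ 40*r/m^2 := key
      _ = 40 * (r^α * r^(1-α)) * (m^2)⁻¹ := by rw [e1]; ring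
      _ ≤ 40 * (r^α * m^(1-α)) * (m^2)⁻¹ := by
          apply mul_le_mul_of_nonneg_right _ (inv_nonneg.mpr (sq_nonneg m))
          exact mul_le_mul_of_nonneg_left h1' (by norm_num)
      _ = 40 * r^α * (m^(1-α) * (m^2)⁻¹) := by ring
      _ = 40 * r^α * m^(-α-1) := by rw [e3]
      _ ≤ 100 * r^α * m^(-α-1) := by
          nlinarith [mul_nonneg hRα (Real.rpow_nonneg hm.le (-α-1))]
  · -- far regime
    push_neg at hc
    have hxa2 : x i ^2 ≤ a^2 := by rw [← sq_abs]; exact pow_le_pow_left₀ (abs_nonneg _) hxa 2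
    have hyb2 : y i ^2 ≤ b^2 := by rw [← sq_abs]; exact pow_le_pow_left₀ (abs_nonneg _) hyb 2
    have hia : a^2 * (a^3)⁻¹ = a⁻¹ := by field_simp
    have hib : b^2 * (b^3)⁻¹ = b⁻¹ := by field_simp
    have hinv3a : (0:ℝ) ≤ (a^3)⁻¹ := inv_nonneg.mpr (by positivity)
    have hinv3b : (0:ℝ) ≤ (b^3)⁻¹ := inv_nonneg.mpr (by positivity)
    have hφxu : x i ^2 * (a^3)⁻¹ ≤ a⁻¹ := by
      calc x i ^2 * (a^3)⁻¹ ≤ a^2 * (a^3)⁻¹ := mul_le_mul_of_nonneg_right hxa2 hinv3a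
        _ = a⁻¹ := hia
    have hφyu : y i ^2 * (b^3)⁻¹ ≤ b⁻¹ := by
      calc y i ^2 * (b^3)⁻¹ ≤ b^2 * (b^3)⁻¹ := mul_le_mul_of_nonneg_right hyb2 hinv3b
        _ = b⁻¹ := hib
    have hφx0 : (0:ℝ) ≤ x i ^2 * (a^3)⁻¹ := mul_nonneg (sq_nonneg _) hinv3a
    have hφy0 : (0:ℝ) ≤ y i ^2 * (b^3)⁻¹ := mul_nonneg (sq_nonneg _) hinv3b
    have hainv : a⁻¹ ≤ m⁻¹ := inv_anti₀ hm hma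
    have hbinv : b⁻¹ ≤ m⁻¹ := inv_anti₀ hm hmb
    have hbound : |(a⁻¹ - x i ^2*(a^3)⁻¹) - (b⁻¹ - y i ^2*(b^3)⁻¹)| ≤ m⁻¹ := by
      rw [abs_le]
      constructor <;> [skip; skip] <;> nlinarith [hφxu, hφyu, hφx0, hφy0, hainv, hbinv]
    refine le_trans hbound ?_
    have h1 : (m/2) ^ α ≤ r ^ α := Real.rpow_le_rpow (by positivity) hc.le hα0
    have h2 : (m/2)^α = m^α / 2^α := Real.div_rpow hm.le (by norm_num : (0:ℝ) ≤ 2) α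
    have h3 : (2:ℝ)^α ≤ 2 := by
      calc (2:ℝ)^α ≤ (2:ℝ)^(1:ℝ) := Real.rpow_le_rpow_of_exponent_le (by norm_num) hα1
        _ = 2 := Real.rpow_one 2
    have h2pos : (0:ℝ) < 2^α := Real.rpow_pos_of_pos (by norm_num) α
    have h4 : m^α / 2 ≤ r^α := by
      have h5 : m^α/2 ≤ m^α/2^α :=
        div_le_div_of_nonneg_left (Real.rpow_nonneg hm.le α) h2pos h3
      calc m^α/2 ≤ m^α/2^α := h5
        _ = (m/2)^α := h2.symm
        _ ≤ r^α := h1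
    have h5 : m^α * m^(-α-1) = m⁻¹ := by
      rw [← Real.rpow_add hm, show α + (-α-1) = -1 by ring, Real.rpow_neg_one]
    calc m⁻¹ = m^α * m^(-α-1) := h5.symm
      _ ≤ (2*r^α) * m^(-α-1) :=
          mul_le_mul_of_nonneg_right (by linarith) (Real.rpow_nonneg hm.le _)
      _ ≤ 100 * r^α * m^(-α-1) := by
          nlinarith [mul_nonneg hRα (Real.rpow_nonneg hm.le (-α-1))]
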